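/- If x and y are vectors in R^{n+1} with a symmetric bilinear form S of signature (n,1), both lying in the same component V⁺ of the negative cone (so S(x,x) < 0, S(y,y) < 0), then -S(x,y)/√(S(x,x)·S(y,y)) ≥ 1, with equality if and only if x and y are positive scalar multiples of each other. -/

import Mathlib

open Finset

lemma S_repr (n : ℕ)
    (S : (Fin (n + 1) → ℝ) →ₗ[ℝ] (Fin (n + 1) → ℝ) →ₗ[ℝ] ℝ)
    (b : Module.Basis (Fin (n + 1)) ℝ (Fin (n + 1) → ℝ))
    (hsig : ∀ i j, S (b i) (b j) =
      if i = j then (if (i : ℕ) < n then 1 else -1) else 0)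
    (u v : Fin (n + 1) → ℝ) :
    S u v = (∑ i ∈ univ.filter (fun i : Fin (n+1) => (i:ℕ) < n),
        b.repr u i * b.repr v i)
      - b.repr u (Fin.last n) * b.repr v (Fin.last n) := by
  have hlast : ∀ i : Fin (n+1), ¬((i:ℕ) < n) → i = Fin.last n := by
    intro i hi
    have := i.isLt
    exact Fin.ext (by rw [Fin.val_last]; omega)
  conv_lhs => rw [← b.sum_repr u, ← b.sum_repr v]
  simp only [map_sum, map_smul, LinearMap.sum_apply, LinearMap.smul_apply, smul_eq_mul, hsig]
  simp only [mul_ite, mul_zero, Finset.sum_ite_eq', Finset.mem_univ, if_true]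
  have key : ∀ x : Fin (n+1),
      (if (x:ℕ) < n then b.repr v x * (b.repr u x * 1) else b.repr v x * (b.repr u x * -1))
      = (if (x:ℕ) < n then b.repr u x * b.repr v x else 0)
        - (if (x:ℕ) < n then 0 else b.repr u x * b.repr v x) := by
    intro x; split <;> ring
  rw [Finset.sum_congr rfl fun x _ => key x, Finset.sum_sub_distrib, ← Finset.sum_filter]
  congr 1
  rw [Finset.sum_eq_single (Fin.last n)]
  · simp
  · intro i _ hi
    have : (i:ℕ) < n := by
      by_contra h
      exact hi (hlast i h)
    simp [this]
  · simp

lemma real_key (p q r s t : ℝ) (hp : 0 ≤ p) (hq : 0 ≤ q) (hCS : r^2 ≤ p*q)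
    (hxs : p < s^2) (hyt : q < t^2) (hst : 0 < s*t) :
    0 < s*t - r ∧ (s^2 - p)*(t^2 - q) ≤ (s*t - r)^2 ∧
    ((s*t - r)^2 = (s^2 - p)*(t^2 - q) → t^2*p - 2*(s*t)*r + s^2*q = 0) := by
  set m := Real.sqrt (p*q) with hmdef
  have hm : m^2 = p*q := Real.sq_sqrt (mul_nonneg hp hq)
  have hm0 : 0 ≤ m := Real.sqrt_nonneg _
  have hrm : r ≤ m := by nlinarith [le_abs_self r, sq_abs r, abs_nonneg r]
  have hmst : m < s*t := by
    have h2 : m^2 < (s*t)^2 := by nlinarith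
    exact lt_of_pow_lt_pow_left₀ 2 hst.le h2
  have e1 : Real.sqrt (s^2*q) * Real.sqrt (t^2*p) = (s*t) * m := by
    rw [← Real.sqrt_mul (by positivity), show s^2*q*(t^2*p) = (s*t)^2 * (p*q) by ring,
      Real.sqrt_mul (sq_nonneg _), Real.sqrt_sq hst.le]
  have ha : (Real.sqrt (s^2*q))^2 = s^2*q := Real.sq_sqrt (by positivity)
  have hb : (Real.sqrt (t^2*p))^2 = t^2*p := Real.sq_sqrt (by positivity)
  have h2 : 2*(s*t)*m ≤ s^2*q + t^2*p := by
    nlinarith [sq_nonneg (Real.sqrt (s^2*q) - Real.sqrt (t^2*p))]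
  have key_id : (s*t - r)^2 - (s^2-p)*(t^2-q)
      = (m - r)*(2*(s*t) - r - m) + (s^2*q + t^2*p - 2*(s*t)*m) := by
    linear_combination hm
  have hfac : 0 ≤ (m - r)*(2*(s*t) - r - m) :=
    mul_nonneg (by linarith) (by linarith)
  refine ⟨by linarith, by linarith, fun h => ?_⟩
  have h0 : (m - r)*(2*(s*t) - r - m) = 0 ∧ s^2*q + t^2*p - 2*(s*t)*m = 0 := by
    constructor <;> linarith
  have hmr : m = r := by
    rcases mul_eq_zero.1 h0.1 with h1 | h1
    · linarith
    · linarith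
  linear_combination h0.2 + (2*(s*t))*hmr

lemma sign_lemma (n : ℕ)
    (S : (Fin (n + 1) → ℝ) →ₗ[ℝ] (Fin (n + 1) → ℝ) →ₗ[ℝ] ℝ)
    (b : Module.Basis (Fin (n + 1)) ℝ (Fin (n + 1) → ℝ))
    (hsig : ∀ i j, S (b i) (b j) =
      if i = j then (if (i : ℕ) < n then 1 else -1) else 0)
    (C : Set (Fin (n + 1) → ℝ)) (hC : IsPreconnected C)
    (hCneg : ∀ z ∈ C, S z z < 0)
    (x y : Fin (n + 1) → ℝ) (hxC : x ∈ C) (hyC : y ∈ C) :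
    0 < b.repr x (Fin.last n) * b.repr y (Fin.last n) := by
  set ℓ : (Fin (n+1) → ℝ) →ₗ[ℝ] ℝ :=
    (Finsupp.lapply (Fin.last n)).comp (b.repr : (Fin (n+1) → ℝ) →ₗ[ℝ] (Fin (n+1) →₀ ℝ))
    with hℓ
  have hℓval : ∀ z, ℓ z = b.repr z (Fin.last n) := fun z => rfl
  have hne : ∀ z ∈ C, ℓ z ≠ 0 := by
    intro z hz h0
    have hzneg := hCneg z hz
    rw [S_repr n S b hsig z z] at hzneg
    have hnn : 0 ≤ ∑ i ∈ univ.filter (fun i : Fin (n+1) => (i:ℕ) < n),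
        b.repr z i * b.repr z i := Finset.sum_nonneg fun i _ => mul_self_nonneg _
    rw [hℓval] at h0
    rw [h0] at hzneg
    linarith
  have hcont : Continuous ℓ := ℓ.continuous_of_finiteDimensional
  by_contra hle
  push_neg at hle
  have hs : ℓ x ≠ 0 := hne x hxC
  have ht : ℓ y ≠ 0 := hne y hyC
  have hlt : ℓ x * ℓ y < 0 := by
    rw [hℓval x, hℓval y] at *
    rcases lt_or_eq_of_le hle with h | h
    · exact h
    · exact absurd h (mul_ne_zero hs ht)
  have h0mem : (0:ℝ) ∈ Set.uIcc (ℓ x) (ℓ y) := by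
    rw [Set.mem_uIcc]
    rcases mul_neg_iff.1 hlt with ⟨h1, h2⟩ | ⟨h1, h2⟩
    · exact Or.inr ⟨h2.le, h1.le⟩
    · exact Or.inl ⟨h1.le, h2.le⟩
  have himg : IsPreconnected (ℓ '' C) := hC.image ℓ hcont.continuousOn
  have h0img : (0:ℝ) ∈ ℓ '' C :=
    himg.ordConnected.uIcc_subset ⟨x, hxC, rfl⟩ ⟨y, hyC, rfl⟩ h0mem
  obtain ⟨z, hz, hz0⟩ := h0img
  exact hne z hz hz0


/-- if `x, y` lie in the same component `V⁺` of the negative cone of a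
symmetric bilinear form `S` of signature `(n,1)` on `ℝ^{n+1}` (so `S x x < 0`, `S y y < 0`),
then `-S x y / √(S x x · S y y) ≥ 1`, with equality iff `y` is a positive multiple of `x`. -/
theorem reverse_cauchy_schwarz_negative_cone
    (n : ℕ)
    (S : (Fin (n + 1) → ℝ) →ₗ[ℝ] (Fin (n + 1) → ℝ) →ₗ[ℝ] ℝ)
    (hsymm : ∀ x y, S x y = S y x)
    (b : Module.Basis (Fin (n + 1)) ℝ (Fin (n + 1) → ℝ))
    (hsig : ∀ i j, S (b i) (b j) =
      if i = j then (if (i : ℕ) < n then 1 else -1) else 0)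
    (x y : Fin (n + 1) → ℝ) (hx : S x x < 0) (hy : S y y < 0)
    (hsame : ∃ C : Set (Fin (n + 1) → ℝ), IsPreconnected C ∧ (∀ z ∈ C, S z z < 0) ∧
      x ∈ C ∧ y ∈ C) :
    1 ≤ -S x y / Real.sqrt (S x x * S y y) ∧
      (-S x y / Real.sqrt (S x x * S y y) = 1 ↔ ∃ t : ℝ, 0 < t ∧ y = t • x) := by
  obtain ⟨C, hC, hCneg, hxC, hyC⟩ := hsame
  have hst := sign_lemma n S b hsig C hC hCneg x y hxC hyC
  -- backward direction of the iff, proved first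
  have backward : ∀ τ : ℝ, 0 < τ → y = τ • x →
      -S x y / Real.sqrt (S x x * S y y) = 1 := by
    intro τ hτ hyx
    rw [hyx]
    have h1 : S x (τ • x) = τ * S x x := by rw [map_smul]; simp
    have h2 : S (τ • x) (τ • x) = τ^2 * S x x := by
      have hsm : S (τ • x) = τ • (S x) := map_smul S τ x
      rw [hsm, LinearMap.smul_apply, smul_eq_mul, h1]; ring
    rw [h1, h2, show S x x * (τ^2 * S x x) = (τ * -S x x)^2 by ring,
      Real.sqrt_sq (by nlinarith), show -(τ * S x x) = τ * -S x x by ring]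
    exact div_self (by nlinarith)
  have hxx := S_repr n S b hsig x x
  have hyy := S_repr n S b hsig y y
  have hxy := S_repr n S b hsig x y
  set sp := univ.filter (fun i : Fin (n+1) => (i:ℕ) < n) with hsp
  set s := b.repr x (Fin.last n) with hs
  set t := b.repr y (Fin.last n) with ht
  set p := ∑ i ∈ sp, b.repr x i * b.repr x i with hpd
  set q := ∑ i ∈ sp, b.repr y i * b.repr y i with hqd
  set r := ∑ i ∈ sp, b.repr x i * b.repr y i with hrd
  have hp : 0 ≤ p := Finset.sum_nonneg fun i _ => mul_self_nonneg _
  have hq : 0 ≤ q := Finset.sum_nonneg fun i _ => mul_self_nonneg _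
  have hCS : r^2 ≤ p*q := by
    rw [hrd, hpd, hqd]
    have h := Finset.sum_mul_sq_le_sq_mul_sq sp (fun i => b.repr x i) (fun i => b.repr y i)
    simpa only [← sq] using h
  have hs2 : p < s^2 := by
    have h1 : p - s * s < 0 := by rw [← hxx]; exact hx
    rw [sq]; linarith
  have ht2 : q < t^2 := by
    have h1 : q - t * t < 0 := by rw [← hyy]; exact hy
    rw [sq]; linarith
  obtain ⟨hpos, hineq, heqimp⟩ := real_key p q r s t hp hq hCS hs2 ht2 hst
  have hD : S x x * S y y = (s^2-p)*(t^2-q) := by rw [hxx, hyy]; ring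
  have hDpos : 0 < S x x * S y y := mul_pos_of_neg_of_neg hx hy
  have hsqrtpos : 0 < Real.sqrt (S x x * S y y) := Real.sqrt_pos.2 hDpos
  have hnum : -S x y = s*t - r := by rw [hxy]; ring
  have hsqrt_le : Real.sqrt (S x x * S y y) ≤ s*t - r := by
    rw [hD]
    calc Real.sqrt ((s^2-p)*(t^2-q)) ≤ Real.sqrt ((s*t-r)^2) := Real.sqrt_le_sqrt hineq
      _ = s*t - r := Real.sqrt_sq hpos.le
  constructor
  · rw [hnum, le_div_iff₀ hsqrtpos, one_mul]; exact hsqrt_le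
  constructor
  · intro h
    have heq1 : s*t - r = Real.sqrt (S x x * S y y) := by
      rw [← hnum]; exact (div_eq_one_iff_eq hsqrtpos.ne').1 h
    have hsq : (s*t - r)^2 = (s^2-p)*(t^2-q) := by
      rw [heq1, Real.sq_sqrt hDpos.le, hD]
    have hzero := heqimp hsq
    have hs0 : s ≠ 0 := left_ne_zero_of_mul hst.ne'
    have hτ : 0 < t/s := by
      have h' : t/s = (s*t)/s^2 := by field_simp
      rw [h']; exact div_pos hst (pow_two_pos_of_ne_zero hs0)
    have hkey : q - (2*(t/s))*r + (t/s)^2*p = 0 := by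
      have e : q - (2*(t/s))*r + (t/s)^2*p = (t^2*p - 2*(s*t)*r + s^2*q)/s^2 := by
        field_simp; ring
      rw [e, hzero, zero_div]
    have hz : ∑ i ∈ sp, (b.repr y i - (t/s) * b.repr x i) * (b.repr y i - (t/s) * b.repr x i) = 0 := by
      have expand : ∀ i ∈ sp, (b.repr y i - (t/s) * b.repr x i) * (b.repr y i - (t/s) * b.repr x i)
          = b.repr y i * b.repr y i - (2*(t/s)) * (b.repr x i * b.repr y i)
            + (t/s)^2 * (b.repr x i * b.repr x i) := fun i _ => by ring
      rw [Finset.sum_congr rfl expand, Finset.sum_add_distrib, Finset.sum_sub_distrib,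
        ← Finset.mul_sum, ← Finset.mul_sum, ← hqd, ← hrd, ← hpd]
      linarith [hkey]
    have hcoord : ∀ i, b.repr y i = (t/s) * b.repr x i := by
      intro i
      by_cases hi : (i:ℕ) < n
      · have hmem : i ∈ sp := by simp [hsp, hi]
        have h0 := (Finset.sum_eq_zero_iff_of_nonneg (fun j _ => mul_self_nonneg _)).1 hz i hmem
        exact sub_eq_zero.1 (mul_self_eq_zero.1 h0)
      · have hi' : i = Fin.last n := by
          have := i.isLt
          exact Fin.ext (by rw [Fin.val_last]; omega)
        rw [hi']
        show t = (t/s) * s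
        rw [div_mul_cancel₀ t hs0]
    refine ⟨t/s, hτ, ?_⟩
    calc y = ∑ i, b.repr y i • b i := (b.sum_repr y).symm
      _ = ∑ i, ((t/s) * b.repr x i) • b i := Finset.sum_congr rfl fun i _ => by rw [hcoord i]
      _ = (t/s) • ∑ i, b.repr x i • b i := by
          rw [Finset.smul_sum]
          exact Finset.sum_congr rfl fun i _ => mul_smul _ _ _
      _ = (t/s) • x := by rw [b.sum_repr]
  · rintro ⟨τ, hτ, hyx⟩
    exact backward τ hτ hyx
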